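/- The function ϱ : Ω_∞ × Ω_∞ → [0,∞) defined by ϱ((t,x),(s,y)) = |t−s|^{1/(2−α)} + min{ |x−y|, |x−y|^{2/(2−α)} min{x_d, y_d}^{−α/(2−α)} } is a quasi-metric on Ω_∞: there exists a constant K_1 = K_1(d,α) > 0 such that ϱ((t,x),(s,y)) ≤ K_1 ( ϱ((t,x),(t̂,x̂)) + ϱ((t̂,x̂),(s,y)) ) for any (t,x), (s,y), (t̂,x̂) ∈ Ω_∞, and ϱ((t,x),(s,y)) = 0 if and only if (t,x) = (s,y). -/

import Mathlib

open MeasureTheory Set Real Filter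
open scoped ENNReal NNReal BigOperators

noncomputable section

/-- Spatial variable: Euclidean space of dimension `d`. -/
abbrev Spc (d : ℕ) := EuclideanSpace ℝ (Fin d)

/-- Space-time point: `(t, x)`. -/
abbrev Pt (d : ℕ) := ℝ × Spc d

/-- Last spatial coordinate `x_d`. -/
def lastc (d : ℕ) (hd : 0 < d) (x : Spc d) : ℝ := x ⟨d - 1, by omega⟩

/-- `x_d` of a space-time point. -/
def xdOf (d : ℕ) (hd : 0 < d) (z : Pt d) : ℝ := lastc d hd z.2

/-- The index of the last coordinate. -/
def lastIdx (d : ℕ) (hd : 0 < d) : Fin d := ⟨d - 1, by omega⟩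

/-- Space-time upper half space `Ω_T = (−∞,T) × ℝ^d_+`, with `T ∈ (−∞,∞]` an extended real. -/
def OmegaT (d : ℕ) (hd : 0 < d) (T : EReal) : Set (Pt d) :=
  {z | (z.1 : EReal) < T ∧ 0 < xdOf d hd z}

/-- Test functions: smooth, compactly supported, with support inside `Ω`. -/
def IsTest (d : ℕ) (Ω : Set (Pt d)) (φ : Pt d → ℝ) : Prop :=
  ContDiff ℝ (⊤ : ℕ∞) φ ∧ HasCompactSupport φ ∧ tsupport φ ⊆ Ω

/-- Spatial partial derivative `D_i f` of a space-time function. -/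
def pderiv' (d : ℕ) {E : Type} [NormedAddCommGroup E] [NormedSpace ℝ E] (i : Fin d)
    (f : Pt d → E) (z : Pt d) : E :=
  fderiv ℝ (fun y => f (z.1, y)) z.2 (EuclideanSpace.single i 1)

/-- Time derivative `∂_t f` of a space-time function. -/
def tderiv' (d : ℕ) {E : Type} [NormedAddCommGroup E] [NormedSpace ℝ E]
    (f : Pt d → E) (z : Pt d) : E :=
  deriv (fun s => f (s, z.2)) z.1

/-- Iterated time derivative `∂_t^n f`. -/
def tderivIter (d : ℕ) {E : Type} [NormedAddCommGroup E] [NormedSpace ℝ E] :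
    ℕ → (Pt d → E) → Pt d → E
  | 0, f => f
  | n + 1, f => tderiv' d (tderivIter d n f)

/-- The (classical) spatial gradient of a space-time function, as a Euclidean vector. -/
def sgrad (d : ℕ) (f : Pt d → ℝ) (z : Pt d) : Spc d :=
  (WithLp.equiv 2 (Fin d → ℝ)).symm fun i => pderiv' d i f z

/-- The tangential part `(ξ_1, …, ξ_{d−1}, 0)` of a vector, i.e. `D_{x'}`-part. -/
def tangPart (d : ℕ) (ξ : Spc d) : Spc d :=
  (WithLp.equiv 2 (Fin d → ℝ)).symm fun i => if (i : ℕ) < d - 1 then ξ i else 0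

/-- `Du` is the spatial weak gradient of `u` on `Ω`. -/
def HasWeakGrad (d : ℕ) (Ω : Set (Pt d)) (u : Pt d → ℝ) (Du : Pt d → Spc d) : Prop :=
  ∀ i : Fin d, ∀ φ : Pt d → ℝ, IsTest d Ω φ →
    ∫ z : Pt d, u z * pderiv' d i φ z = -∫ z : Pt d, Du z i * φ z

/-- Uniform ellipticity and boundedness of a constant matrix, with ellipticity constant `ν`. -/
def EllipticAt (d : ℕ) (ν : ℝ) (A : Fin d → Fin d → ℝ) : Prop :=
  (∀ ξ : Spc d, ν * ‖ξ‖ ^ 2 ≤ ∑ i, ∑ j, A i j * ξ i * ξ j) ∧ ∀ i j, |A i j| ≤ ν⁻¹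

/-- Degeneracy condition `ν ≤ μ(s)/s^α ≤ ν⁻¹` for `s` in a set `S ⊆ ℝ_+`. -/
def MuCondOn (ν α : ℝ) (μ : ℝ → ℝ) (S : Set ℝ) : Prop :=
  ∀ s ∈ S, ν ≤ μ s / s ^ α ∧ μ s / s ^ α ≤ ν⁻¹

/-- `u` (with weak gradient `Du`) is a weak solution of
`u_t + λ c₀ u − μ(x_d) D_i (a_{ij} D_j u + F_i) = f` in `Ω`,
in the sense of Definition 2.1 (all derivatives moved onto the test function or realized by `Du`). -/
def IsWeakSol (d : ℕ) (hd : 0 < d) (Ω : Set (Pt d)) (μ : ℝ → ℝ)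
    (c0 : Pt d → ℝ) (a : Fin d → Fin d → Pt d → ℝ) (lam : ℝ)
    (F : Pt d → Spc d) (f : Pt d → ℝ) (u : Pt d → ℝ) (Du : Pt d → Spc d) : Prop :=
  ∀ φ : Pt d → ℝ, IsTest d Ω φ →
    (∫ z in Ω, (μ (xdOf d hd z))⁻¹ * (-(u z) * tderiv' d φ z + lam * c0 z * u z * φ z))
      + (∫ z in Ω, ∑ i, ((∑ j, a i j z * Du z j) + F z i) * pderiv' d i φ z)
      = ∫ z in Ω, (μ (xdOf d hd z))⁻¹ * f z * φ z

/-- The weight `x_d^{−α/2}`. -/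
def wtm (d : ℕ) (hd : 0 < d) (α : ℝ) (z : Pt d) : ℝ := xdOf d hd z ^ (-(α / 2))

/-- Membership in the weighted Sobolev space `W^1_p` w.r.t. a measure `m`:
`u x_d^{−α/2} ∈ L_p(m)` and `Du ∈ L_p(m)`. -/
def MemW1 (d : ℕ) (hd : 0 < d) (α : ℝ) (p : ℝ≥0∞) (m : Measure (Pt d))
    (u : Pt d → ℝ) (Du : Pt d → Spc d) : Prop :=
  MemLp (fun z => u z * wtm d hd α z) p m ∧ MemLp Du p m

/-- `v` vanishes near the boundary `{x_d = 0}`. -/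
def VanishNearBdry (d : ℕ) (hd : 0 < d) (v : Pt d → ℝ) : Prop :=
  ∃ c > 0, ∀ z : Pt d, xdOf d hd z < c → v z = 0

/-- The `W^1_p(m)` distance between `(u, Du)` and `(v, Dv)`. -/
def W1Dist (d : ℕ) (hd : 0 < d) (α : ℝ) (p : ℝ≥0∞) (m : Measure (Pt d))
    (u v : Pt d → ℝ) (Du Dv : Pt d → Spc d) : ℝ≥0∞ :=
  eLpNorm (fun z => (u z - v z) * wtm d hd α z) p m
    + eLpNorm (fun z => Du z - Dv z) p m

/-- `u ∈ 𝔚^1_p`: approximable in `W^1_p(m)` by smooth compactly supported functions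
vanishing near `{x_d = 0}`. -/
def ApproxBC (d : ℕ) (hd : 0 < d) (α : ℝ) (p : ℝ≥0∞) (m : Measure (Pt d))
    (u : Pt d → ℝ) (Du : Pt d → Spc d) : Prop :=
  ∀ ε : ℝ, 0 < ε → ∃ v : Pt d → ℝ, ContDiff ℝ (⊤ : ℕ∞) v ∧ HasCompactSupport v ∧
    VanishNearBdry d hd v ∧
    W1Dist d hd α p m u v Du (sgrad d v) < ENNReal.ofReal ε

/-- Approximability by smooth compactly supported functions (no boundary condition). -/
def ApproxI (d : ℕ) (hd : 0 < d) (α : ℝ) (p : ℝ≥0∞) (m : Measure (Pt d))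
    (u : Pt d → ℝ) (Du : Pt d → Spc d) : Prop :=
  ∀ ε : ℝ, 0 < ε → ∃ v : Pt d → ℝ, ContDiff ℝ (⊤ : ℕ∞) v ∧ HasCompactSupport v ∧
    W1Dist d hd α p m u v Du (sgrad d v) < ENNReal.ofReal ε

/-- `u_t ∈ ℍ^{−1}_p`: there are `G ∈ L_p(m)^d`, `g₁ x_d^{1−α}, g₂ x_d^{−α/2} ∈ L_p(m)` with
`u_t = μ(x_d) D_i G_i + g₁ + g₂` weakly on `Ω` (after division by `μ`). -/
def MemHm1 (d : ℕ) (hd : 0 < d) (α : ℝ) (p : ℝ≥0∞) (Ω : Set (Pt d)) (m : Measure (Pt d))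
    (μ : ℝ → ℝ) (u : Pt d → ℝ) : Prop :=
  ∃ G : Pt d → Spc d, ∃ g1 g2 : Pt d → ℝ,
    MemLp G p m ∧
    MemLp (fun z => g1 z * xdOf d hd z ^ (1 - α)) p m ∧
    MemLp (fun z => g2 z * wtm d hd α z) p m ∧
    ∀ φ : Pt d → ℝ, IsTest d Ω φ →
      -∫ z in Ω, (μ (xdOf d hd z))⁻¹ * u z * tderiv' d φ z
        = -(∫ z in Ω, ∑ i, G z i * pderiv' d i φ z)
          + ∫ z in Ω, (μ (xdOf d hd z))⁻¹ * (g1 z + g2 z) * φ z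

/-- `u ∈ 𝓗^1_p(Ω, m)` with the homogeneous Dirichlet boundary condition on `{x_d = 0}`. -/
def MemH1BC (d : ℕ) (hd : 0 < d) (α : ℝ) (p : ℝ≥0∞) (Ω : Set (Pt d)) (m : Measure (Pt d))
    (μ : ℝ → ℝ) (u : Pt d → ℝ) (Du : Pt d → Spc d) : Prop :=
  MemW1 d hd α p m u Du ∧ HasWeakGrad d Ω u Du ∧ ApproxBC d hd α p m u Du ∧
    MemHm1 d hd α p Ω m μ u

/-- `u ∈ 𝓗^1_p(Ω, m)` (interior version, no boundary condition). -/
def MemH1I (d : ℕ) (hd : 0 < d) (α : ℝ) (p : ℝ≥0∞) (Ω : Set (Pt d)) (m : Measure (Pt d))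
    (μ : ℝ → ℝ) (u : Pt d → ℝ) (Du : Pt d → Spc d) : Prop :=
  MemW1 d hd α p m u Du ∧ HasWeakGrad d Ω u Du ∧ ApproxI d hd α p m u Du ∧
    MemHm1 d hd α p Ω m μ u

/-- `r(ρ, s) = max{ρ, s}^{α/2} ρ^{1−α/2}`. -/
def rad (α ρ s : ℝ) : ℝ := max ρ s ^ (α / 2) * ρ ^ (1 - α / 2)

/-- Parabolic cylinder `Q_ρ(z₀)`. -/
def Qc (d : ℕ) (hd : 0 < d) (α ρ : ℝ) (z0 : Pt d) : Set (Pt d) :=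
  Ioo (z0.1 - ρ ^ (2 - α)) z0.1 ×ˢ Metric.ball z0.2 (rad α ρ (xdOf d hd z0))

/-- Upper-half parabolic cylinder `Q_ρ^+(z₀)`. -/
def Qp (d : ℕ) (hd : 0 < d) (α ρ : ℝ) (z0 : Pt d) : Set (Pt d) :=
  Qc d hd α ρ z0 ∩ {z | 0 < xdOf d hd z}

/-- Centered cylinder `Q_ρ = (−ρ^{2−α}, 0) × B_ρ(0)`. -/
def Qstd (d : ℕ) (α ρ : ℝ) : Set (Pt d) :=
  Ioo (-(ρ ^ (2 - α))) 0 ×ˢ Metric.ball (0 : Spc d) ρ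

/-- Centered upper-half cylinder `Q_ρ^+`. -/
def QstdP (d : ℕ) (hd : 0 < d) (α ρ : ℝ) : Set (Pt d) :=
  Qstd d α ρ ∩ {z | 0 < xdOf d hd z}

/-- Half ball `B_ρ^+ ⊂ ℝ^d_+` centered at the origin. -/
def BhalfStd (d : ℕ) (hd : 0 < d) (ρ : ℝ) : Set (Spc d) :=
  Metric.ball (0 : Spc d) ρ ∩ {x | 0 < lastc d hd x}

/-- The frozen coefficients `[a_{ij}]`, `[c₀]` satisfy the ellipticity/boundedness bounds on
the interval `((s − r)_+, s + r)`. -/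
def LocCoefOK (d : ℕ) (ν : ℝ) (ab : Fin d → Fin d → ℝ → ℝ) (cb : ℝ → ℝ) (s r : ℝ) : Prop :=
  ∀ y ∈ Ioo (max (s - r) 0) (s + r),
    EllipticAt d ν (fun i j => ab i j y) ∧ ν ≤ cb y ∧ cb y ≤ ν⁻¹

/-- The partial mean oscillation of `(a, c₀)` against `(ab, cb)` on `Q_ρ^+(z)` is `< δ`. -/
def OscOK (d : ℕ) (hd : 0 < d) (α : ℝ) (a : Fin d → Fin d → Pt d → ℝ) (c0 : Pt d → ℝ)
    (ab : Fin d → Fin d → ℝ → ℝ) (cb : ℝ → ℝ) (ρ : ℝ) (z : Pt d) (δ : ℝ) : Prop :=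
  ∀ i j, (⨍ w in Qp d hd α ρ z, |a i j w - ab i j (xdOf d hd w)|)
    + (⨍ w in Qp d hd α ρ z, |c0 w - cb (xdOf d hd w)|) < δ

/-- Assumption (ρ₀, δ): partial VMO condition on the coefficients. -/
def AssumpVMO (d : ℕ) (hd : 0 < d) (ν α : ℝ) (T : EReal)
    (a : Fin d → Fin d → Pt d → ℝ) (c0 : Pt d → ℝ) (ρ0 δ : ℝ) : Prop :=
  ∀ ρ ∈ Ioo (0 : ℝ) ρ0, ∀ z ∈ closure (OmegaT d hd T),
    ∃ ab : Fin d → Fin d → ℝ → ℝ, ∃ cb : ℝ → ℝ,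
      LocCoefOK d ν ab cb (xdOf d hd z) (rad α ρ (xdOf d hd z)) ∧
        OscOK d hd α a c0 ab cb ρ z δ

/-- `L^∞` norm (in `ℝ≥0∞`) of a function on a set `Q`. -/
def supNorm (d : ℕ) {E : Type} [NormedAddCommGroup E] (Q : Set (Pt d)) (f : Pt d → E) : ℝ≥0∞ :=
  ⨆ z ∈ Q, (‖f z‖₊ : ℝ≥0∞)

/-- Hölder seminorm in the spatial variables (in `ℝ≥0∞`):
`[f]_{C^{0,β}(Q)} = sup {|f(t,x) − f(t,y)| / |x−y|^β}`. -/
def holSemi (d : ℕ) {E : Type} [NormedAddCommGroup E] (β : ℝ) (Q : Set (Pt d))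
    (f : Pt d → E) : ℝ≥0∞ :=
  ⨆ z ∈ Q, ⨆ w ∈ Q, ⨆ (_ : z.1 = w.1),
    ENNReal.ofReal (‖f z - f w‖ / ‖z.2 - w.2‖ ^ β)

/-- `C^{k,0}` norm: `∑_{i ≤ k} ‖∂_t^i f‖_{L^∞(Q)}`. -/
def normCk0 (d : ℕ) {E : Type} [NormedAddCommGroup E] [NormedSpace ℝ E]
    (k : ℕ) (Q : Set (Pt d)) (f : Pt d → E) : ℝ≥0∞ :=
  ∑ i ∈ Finset.range (k + 1), supNorm d Q (tderivIter d i f)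

/-- `C^{k,β}` norm: `‖f‖_{C^{k,0}(Q)} + ∑_{i ≤ k} [∂_t^i f]_{C^{0,β}(Q)}`. -/
def normCkHol (d : ℕ) {E : Type} [NormedAddCommGroup E] [NormedSpace ℝ E]
    (k : ℕ) (β : ℝ) (Q : Set (Pt d)) (f : Pt d → E) : ℝ≥0∞ :=
  normCk0 d k Q f + ∑ i ∈ Finset.range (k + 1), holSemi d β Q (tderivIter d i f)

/-- Weighted parabolic Hölder seminorm `[f]_{C^{β/2,β}_α(Q)}` with weight factor
`c = x_{0d}^{−α/2}` : `sup |f(s,x) − f(t,y)| / (c|x−y| + |t−s|^{1/2})^β`. -/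
def holSemiW (d : ℕ) {E : Type} [NormedAddCommGroup E] (c β : ℝ) (Q : Set (Pt d))
    (f : Pt d → E) : ℝ≥0∞ :=
  ⨆ z ∈ Q, ⨆ w ∈ Q,
    ENNReal.ofReal (‖f z - f w‖ / (c * ‖z.2 - w.2‖ + |z.1 - w.1| ^ ((1 : ℝ) / 2)) ^ β)

/-- The data function `g = x_d^{1−α}|f₁| + λ^{−1/2} x_d^{−α/2}|f₂|`. -/
def gfun (d : ℕ) (hd : 0 < d) (α lam : ℝ) (f1 f2 : Pt d → ℝ) (z : Pt d) : ℝ :=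
  xdOf d hd z ^ (1 - α) * |f1 z| + lam ^ (-(1 / 2) : ℝ) * (wtm d hd α z * |f2 z|)

/-- The main estimate `‖Du‖_{L_p(m)} + √λ ‖x_d^{−α/2} u‖_{L_p(m)} ≤ N(‖F‖_{L_p(m)} + ‖g‖_{L_p(m)})`. -/
def MainEst (d : ℕ) (hd : 0 < d) (α : ℝ) (p : ℝ≥0∞) (m : Measure (Pt d)) (N lam : ℝ)
    (F : Pt d → Spc d) (g : Pt d → ℝ) (u : Pt d → ℝ) (Du : Pt d → Spc d) : Prop :=
  eLpNorm Du p m + ENNReal.ofReal (Real.sqrt lam) * eLpNorm (fun z => u z * wtm d hd α z) p m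
    ≤ ENNReal.ofReal N * (eLpNorm F p m + eLpNorm g p m)

/-- The quasi-metric `ϱ` on `Ω_∞ = ℝ × ℝ^d_+`. -/
def varrho (d : ℕ) (hd : 0 < d) (α : ℝ) (z w : Pt d) : ℝ :=
  |z.1 - w.1| ^ (1 / (2 - α)) +
    min ‖z.2 - w.2‖
      (‖z.2 - w.2‖ ^ (2 / (2 - α)) * min (xdOf d hd z) (xdOf d hd w) ^ (-(α / (2 - α))))

lemma coord_le_norm (d : ℕ) (v : EuclideanSpace ℝ (Fin d)) (i : Fin d) : |v i| ≤ ‖v‖ := by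
  rw [EuclideanSpace.norm_eq, ← Real.sqrt_sq_eq_abs]
  apply Real.sqrt_le_sqrt
  have h : v i ^ 2 = ‖v i‖ ^ 2 := by simp [Real.norm_eq_abs, sq_abs]
  rw [h]
  exact Finset.single_le_sum (f := fun j => ‖v j‖ ^ 2) (fun j _ => by positivity)
    (Finset.mem_univ i)

lemma min_eq_div' {γ A m : ℝ} (hγ : 0 < γ) (hA : 0 ≤ A) (hm : 0 < m) :
    min A (A ^ (1 + γ) * m ^ (-γ)) = A ^ (1 + γ) / max m A ^ γ := by
  rcases hA.eq_or_lt with h0 | hA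
  · rw [← h0, Real.zero_rpow (by positivity)]
    simp
  have hA1 : A ^ (1 + γ) = A * A ^ γ := by
    rw [Real.rpow_add hA, Real.rpow_one]
  rcases le_total A m with h | h
  · rw [max_eq_left h, Real.rpow_neg hm.le, ← div_eq_mul_inv, min_eq_right]
    rw [div_le_iff₀ (by positivity), hA1]
    have h2 := Real.rpow_le_rpow hA.le h hγ.le
    nlinarith [Real.rpow_nonneg hA.le γ]
  · have hgm : m ^ γ ≤ A ^ γ := Real.rpow_le_rpow hm.le h hγ.le
    have hAd : A ^ (1 + γ) / A ^ γ = A := by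
      rw [hA1, mul_div_assoc, div_self (by positivity), mul_one]
    rw [max_eq_right h, hAd]
    apply min_eq_left
    rw [Real.rpow_neg hm.le, hA1]
    have h1 : (1 : ℝ) ≤ A ^ γ * (m ^ γ)⁻¹ := by
      rw [← div_eq_mul_inv, le_div_iff₀ (by positivity)]
      simpa using hgm
    nlinarith

lemma timeQT {β : ℝ} (hβ : 0 < β) (t u s : ℝ) :
    |t - s| ^ β ≤ 2 ^ β * (|t - u| ^ β + |u - s| ^ β) := by
  set M := max |t - u| |u - s| with hMdef
  have hMn : 0 ≤ M := le_trans (abs_nonneg _) (le_max_left _ _)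
  have hM : |t - s| ≤ 2 * M := by
    have := abs_sub_le t u s
    have h1 : |t - u| ≤ M := le_max_left _ _
    have h2 : |u - s| ≤ M := le_max_right _ _
    linarith
  have h1 : |t - s| ^ β ≤ (2 * M) ^ β := Real.rpow_le_rpow (abs_nonneg _) hM hβ.le
  rw [Real.mul_rpow (by norm_num) hMn] at h1
  refine h1.trans ?_
  have hMs : M ^ β ≤ |t - u| ^ β + |u - s| ^ β := by
    rcases le_total |t - u| |u - s| with h | h
    · rw [hMdef, max_eq_right h]
      nlinarith [Real.rpow_nonneg (abs_nonneg (t - u)) β]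
    · rw [hMdef, max_eq_left h]
      nlinarith [Real.rpow_nonneg (abs_nonneg (u - s)) β]
  have : (0:ℝ) ≤ (2:ℝ) ^ β := Real.rpow_nonneg (by norm_num) β
  nlinarith

lemma stepQT {γ : ℝ} (hγ : 0 < γ) {a b s u Q : ℝ} (ha : 0 ≤ a) (hb : 0 ≤ b)
    (hs : 0 < s) (hu : 0 < u) (hQa : a ≤ Q) (hQs : s ≤ Q) (hab : a ≤ 2 * b)
    (hsu : |s - u| ≤ b) :
    a ^ (1 + γ) / Q ^ γ ≤ 2 ^ (1 + 2 * γ) * (b ^ (1 + γ) / (max (max s u) b) ^ γ) := by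
  set Q1 := max (max s u) b with hQ1def
  have hQ : 0 < Q := lt_of_lt_of_le hs hQs
  have hQ1 : 0 < Q1 := lt_of_lt_of_le hs (le_trans (le_max_left _ _) (le_max_left _ _))
  have hub : u ≤ s + b := by
    have := abs_le.mp hsu
    linarith [this.1]
  rcases eq_or_lt_of_le ha with h0 | ha'
  · rw [← h0, Real.zero_rpow (by positivity), zero_div]
    positivity
  · have hb' : 0 < b := by linarith
    rw [← mul_div_assoc, div_le_div_iff₀ (by positivity) (by positivity)]
    have he3 : (2:ℝ) ^ ((1:ℝ) + γ) * 2 ^ γ = 2 ^ (1 + 2 * γ) := by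
      rw [← Real.rpow_add (by norm_num)]
      ring_nf
    rcases le_total b Q with hbQ | hQb
    · have e1 : a ^ (1 + γ) ≤ 2 ^ ((1:ℝ) + γ) * b ^ (1 + γ) := by
        rw [← Real.mul_rpow (by norm_num) hb]
        exact Real.rpow_le_rpow ha hab (by positivity)
      have hQ12 : Q1 ≤ 2 * Q := by
        rw [hQ1def]
        refine max_le (max_le (by linarith) (by linarith)) (by linarith)
      have e2 : Q1 ^ γ ≤ 2 ^ γ * Q ^ γ := by
        rw [← Real.mul_rpow (by norm_num) hQ.le]
        exact Real.rpow_le_rpow hQ1.le hQ12 hγ.le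
      calc a ^ (1 + γ) * Q1 ^ γ
          ≤ (2 ^ ((1:ℝ) + γ) * b ^ (1 + γ)) * (2 ^ γ * Q ^ γ) := by
            apply mul_le_mul e1 e2 (by positivity) (by positivity)
        _ = 2 ^ ((1:ℝ) + 2 * γ) * b ^ (1 + γ) * Q ^ γ := by rw [← he3]; ring
    · have f1 : a ^ (1 + γ) ≤ a * Q ^ γ := by
        rw [Real.rpow_add ha', Real.rpow_one]
        exact mul_le_mul_of_nonneg_left (Real.rpow_le_rpow ha'.le hQa hγ.le) ha'.le
      have hQ12 : Q1 ≤ 2 * b := by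
        rw [hQ1def]
        refine max_le (max_le (by linarith) (by linarith)) (by linarith)
      have f2 : Q1 ^ γ ≤ 2 ^ γ * b ^ γ := by
        rw [← Real.mul_rpow (by norm_num) hb]
        exact Real.rpow_le_rpow hQ1.le hQ12 hγ.le
      have hb1 : b ^ (1 + γ) = b * b ^ γ := by
        rw [Real.rpow_add hb', Real.rpow_one]
      have hee : (2:ℝ) ^ ((1:ℝ) + γ) ≤ 2 ^ (1 + 2 * γ) := by
        apply Real.rpow_le_rpow_of_exponent_le (by norm_num)
        linarith
      have h21 : (2:ℝ) * 2 ^ γ = 2 ^ ((1:ℝ) + γ) := by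
        rw [Real.rpow_add (by norm_num), Real.rpow_one]
      calc a ^ (1 + γ) * Q1 ^ γ
          ≤ (a * Q ^ γ) * (2 ^ γ * b ^ γ) :=
            mul_le_mul f1 f2 (by positivity) (by positivity)
        _ ≤ ((2 * b) * Q ^ γ) * (2 ^ γ * b ^ γ) := by
            have : (0:ℝ) ≤ Q ^ γ * (2 ^ γ * b ^ γ) := by positivity
            nlinarith
        _ = 2 ^ ((1:ℝ) + γ) * b ^ (1 + γ) * Q ^ γ := by
            rw [hb1, ← h21]; ring
        _ ≤ 2 ^ ((1:ℝ) + 2 * γ) * b ^ (1 + γ) * Q ^ γ := by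
            apply mul_le_mul_of_nonneg_right (mul_le_mul_of_nonneg_right hee (by positivity))
              (by positivity)

lemma coreQT {γ : ℝ} (hγ : 0 < γ) {a b c xd yd vd : ℝ}
    (hxd : 0 < xd) (hyd : 0 < yd) (hvd : 0 < vd)
    (ha : 0 ≤ a) (hb : 0 ≤ b) (hc : 0 ≤ c) (habc : a ≤ b + c)
    (h1 : |xd - vd| ≤ b) (h2 : |vd - yd| ≤ c) :
    a ^ (1 + γ) / (max (max xd yd) a) ^ γ ≤
      2 ^ (1 + 2 * γ) * (b ^ (1 + γ) / (max (max xd vd) b) ^ γ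
        + c ^ (1 + γ) / (max (max vd yd) c) ^ γ) := by
  have hQa : a ≤ max (max xd yd) a := le_max_right _ _
  have hb0 : (0:ℝ) ≤ max (max xd vd) b :=
    le_trans hxd.le (le_trans (le_max_left _ _) (le_max_left _ _))
  have hc0 : (0:ℝ) ≤ max (max vd yd) c :=
    le_trans hvd.le (le_trans (le_max_left _ _) (le_max_left _ _))
  have htb : 0 ≤ b ^ (1 + γ) / (max (max xd vd) b) ^ γ :=
    div_nonneg (Real.rpow_nonneg hb _) (Real.rpow_nonneg hb0 _)
  have htc : 0 ≤ c ^ (1 + γ) / (max (max vd yd) c) ^ γ :=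
    div_nonneg (Real.rpow_nonneg hc _) (Real.rpow_nonneg hc0 _)
  have h2pos : (0:ℝ) ≤ (2:ℝ) ^ (1 + 2 * γ) := Real.rpow_nonneg (by norm_num) _
  rcases le_total b c with h | h
  · have hac : a ≤ 2 * c := by linarith
    have key := stepQT hγ ha hc hyd hvd hQa
      (le_trans (le_max_right xd yd) (le_max_left _ _)) hac (by rwa [abs_sub_comm])
    rw [max_comm yd vd] at key
    nlinarith
  · have hab2 : a ≤ 2 * b := by linarith
    have key := stepQT hγ ha hb hxd hvd hQa
      (le_trans (le_max_left xd yd) (le_max_left _ _)) hab2 h1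
    nlinarith

lemma conv_le {γ x P Q : ℝ} (hγ : 0 < γ) (hx : 0 ≤ x) (hP : 0 < P) (hQ : 0 < Q)
    (hPQ : Q ≤ 2 * P) :
    x ^ (1 + γ) / P ^ γ ≤ 2 ^ γ * (x ^ (1 + γ) / Q ^ γ) := by
  rw [← mul_div_assoc, div_le_div_iff₀ (by positivity) (by positivity)]
  have e2 : Q ^ γ ≤ 2 ^ γ * P ^ γ := by
    rw [← Real.mul_rpow (by norm_num) hP.le]
    exact Real.rpow_le_rpow hQ.le hPQ hγ.le
  nlinarith [Real.rpow_nonneg hx (1 + γ), Real.rpow_nonneg hQ.le γ]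

lemma denom_mono {γ x P Q : ℝ} (hγ : 0 < γ) (hx : 0 ≤ x) (hP : 0 < P) (hPQ : P ≤ Q) :
    x ^ (1 + γ) / Q ^ γ ≤ x ^ (1 + γ) / P ^ γ := by
  apply div_le_div_of_nonneg_left (Real.rpow_nonneg hx _) (by positivity)
  exact Real.rpow_le_rpow hP.le hPQ hγ.le

/-- `ϱ` is a quasi-metric on `Ω_∞`. -/
theorem stmt19 (d : ℕ) (hd : 0 < d) (α : ℝ) (hα : α ∈ Ioo (0 : ℝ) 2) :
    ∃ K1 : ℝ, 0 < K1 ∧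
      (∀ z ∈ OmegaT d hd ⊤, ∀ w ∈ OmegaT d hd ⊤, ∀ v ∈ OmegaT d hd ⊤,
        varrho d hd α z w ≤ K1 * (varrho d hd α z v + varrho d hd α v w)) ∧
      (∀ z ∈ OmegaT d hd ⊤, ∀ w ∈ OmegaT d hd ⊤, (varrho d hd α z w = 0 ↔ z = w)) := by
  obtain ⟨hα0, hα2⟩ := hα
  have hc2 : (0:ℝ) < 2 - α := by linarith
  have hγ : 0 < α / (2 - α) := by positivity
  have hβ : 0 < 1 / (2 - α) := by positivity
  have h2c : 2 / (2 - α) = 1 + α / (2 - α) := by field_simp; ring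
  have hco : ∀ x y : Spc d, |lastc d hd x - lastc d hd y| ≤ ‖x - y‖ := by
    intro x y
    have h := coord_le_norm d (x - y) ⟨d - 1, by omega⟩
    simpa [lastc] using h
  have hrw : ∀ z w : Pt d, 0 < xdOf d hd z → 0 < xdOf d hd w →
      varrho d hd α z w = |z.1 - w.1| ^ ((1:ℝ) / (2 - α)) +
        ‖z.2 - w.2‖ ^ (1 + α / (2 - α)) /
          (max (min (xdOf d hd z) (xdOf d hd w)) ‖z.2 - w.2‖) ^ (α / (2 - α)) := by
    intro z w hz hw
    rw [varrho, h2c, min_eq_div' hγ (norm_nonneg _) (lt_min hz hw)]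
  refine ⟨2 ^ ((1:ℝ)/(2-α)) + 2 ^ (1 + 3 * (α/(2-α))), by positivity, ?_, ?_⟩
  · intro z hz w hw v hv
    have hz2 : 0 < xdOf d hd z := hz.2
    have hw2 : 0 < xdOf d hd w := hw.2
    have hv2 : 0 < xdOf d hd v := hv.2
    rw [hrw z w hz2 hw2, hrw z v hz2 hv2, hrw v w hv2 hw2]
    have h0 : |xdOf d hd z - xdOf d hd w| ≤ ‖z.2 - w.2‖ := hco z.2 w.2
    have h1 : |xdOf d hd z - xdOf d hd v| ≤ ‖z.2 - v.2‖ := hco z.2 v.2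
    have h2 : |xdOf d hd v - xdOf d hd w| ≤ ‖v.2 - w.2‖ := hco v.2 w.2
    have habc : ‖z.2 - w.2‖ ≤ ‖z.2 - v.2‖ + ‖v.2 - w.2‖ := by
      have e : z.2 - w.2 = (z.2 - v.2) + (v.2 - w.2) := by abel
      rw [e]; exact norm_add_le _ _
    set xz := xdOf d hd z
    set xw := xdOf d hd w
    set xv := xdOf d hd v
    set a := ‖z.2 - w.2‖
    set b := ‖z.2 - v.2‖
    set c := ‖v.2 - w.2‖
    have ha : 0 ≤ a := norm_nonneg _
    have hb : 0 ≤ b := norm_nonneg _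
    have hcn : 0 ≤ c := norm_nonneg _
    set γ := α / (2 - α) with hγdef
    -- time part
    have hT := timeQT hβ z.1 v.1 w.1
    -- spatial part
    have hPmin : (0:ℝ) < min xz xw := lt_min hz2 hw2
    have hPpos : (0:ℝ) < max (min xz xw) a := lt_of_lt_of_le hPmin (le_max_left _ _)
    have hQpos : (0:ℝ) < max (max xz xw) a :=
      lt_of_lt_of_le hz2 (le_trans (le_max_left _ _) (le_max_left _ _))
    have hmm : max xz xw ≤ min xz xw + a := by
      have hms := max_sub_min_eq_abs xz xw
      rw [abs_sub_comm] at hms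
      linarith
    have hQ2P : max (max xz xw) a ≤ 2 * max (min xz xw) a := by
      have hp1 : min xz xw ≤ max (min xz xw) a := le_max_left _ _
      have hp2 : a ≤ max (min xz xw) a := le_max_right _ _
      exact max_le (by linarith) (by linarith)
    have step1 : a ^ (1 + γ) / (max (min xz xw) a) ^ γ ≤
        2 ^ γ * (a ^ (1 + γ) / (max (max xz xw) a) ^ γ) :=
      conv_le hγ ha hPpos hQpos hQ2P
    have step2 := coreQT hγ hz2 hw2 hv2 ha hb hcn habc h1 h2
    have hP1pos : (0:ℝ) < max (min xz xv) b := lt_of_lt_of_le (lt_min hz2 hv2) (le_max_left _ _)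
    have hP2pos : (0:ℝ) < max (min xv xw) c := lt_of_lt_of_le (lt_min hv2 hw2) (le_max_left _ _)
    have step3b : b ^ (1 + γ) / (max (max xz xv) b) ^ γ ≤
        b ^ (1 + γ) / (max (min xz xv) b) ^ γ :=
      denom_mono hγ hb hP1pos (max_le_max (min_le_max) le_rfl)
    have step3c : c ^ (1 + γ) / (max (max xv xw) c) ^ γ ≤
        c ^ (1 + γ) / (max (min xv xw) c) ^ γ :=
      denom_mono hγ hcn hP2pos (max_le_max (min_le_max) le_rfl)
    have h2γn : (0:ℝ) ≤ (2:ℝ) ^ γ := Real.rpow_nonneg (by norm_num) _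
    have h22γn : (0:ℝ) ≤ (2:ℝ) ^ (1 + 2*γ) := Real.rpow_nonneg (by norm_num) _
    have hS : a ^ (1 + γ) / (max (min xz xw) a) ^ γ ≤
        2 ^ (1 + 3 * γ) * (b ^ (1 + γ) / (max (min xz xv) b) ^ γ
          + c ^ (1 + γ) / (max (min xv xw) c) ^ γ) := by
      calc a ^ (1 + γ) / (max (min xz xw) a) ^ γ
          ≤ 2 ^ γ * (a ^ (1 + γ) / (max (max xz xw) a) ^ γ) := step1
        _ ≤ 2 ^ γ * (2 ^ (1 + 2*γ) * (b ^ (1 + γ) / (max (max xz xv) b) ^ γ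
              + c ^ (1 + γ) / (max (max xv xw) c) ^ γ)) :=
            mul_le_mul_of_nonneg_left step2 h2γn
        _ ≤ 2 ^ γ * (2 ^ (1 + 2*γ) * (b ^ (1 + γ) / (max (min xz xv) b) ^ γ
              + c ^ (1 + γ) / (max (min xv xw) c) ^ γ)) := by
            apply mul_le_mul_of_nonneg_left _ h2γn
            exact mul_le_mul_of_nonneg_left (add_le_add step3b step3c) h22γn
        _ = 2 ^ (1 + 3 * γ) * (b ^ (1 + γ) / (max (min xz xv) b) ^ γ
              + c ^ (1 + γ) / (max (min xv xw) c) ^ γ) := by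
            rw [← mul_assoc, ← Real.rpow_add (by norm_num : (0:ℝ) < 2)]
            have hee : γ + (1 + 2 * γ) = 1 + 3 * γ := by ring
            rw [hee]
    have hT1 : (0:ℝ) ≤ |z.1 - v.1| ^ ((1:ℝ)/(2-α)) := Real.rpow_nonneg (abs_nonneg _) _
    have hT2 : (0:ℝ) ≤ |v.1 - w.1| ^ ((1:ℝ)/(2-α)) := Real.rpow_nonneg (abs_nonneg _) _
    have hS1 : (0:ℝ) ≤ b ^ (1 + γ) / (max (min xz xv) b) ^ γ := by positivity
    have hS2 : (0:ℝ) ≤ c ^ (1 + γ) / (max (min xv xw) c) ^ γ := by positivity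
    have hCn : (0:ℝ) ≤ (2:ℝ) ^ ((1:ℝ)/(2-α)) := Real.rpow_nonneg (by norm_num) _
    have hDn : (0:ℝ) ≤ (2:ℝ) ^ (1 + 3*γ) := Real.rpow_nonneg (by norm_num) _
    nlinarith [mul_nonneg hCn (add_nonneg hS1 hS2), mul_nonneg hDn (add_nonneg hT1 hT2)]
  · intro z hz w hw
    constructor
    · intro h
      rw [varrho] at h
      have hmin : 0 < min (xdOf d hd z) (xdOf d hd w) := lt_min hz.2 hw.2
      have hT0 : 0 ≤ |z.1 - w.1| ^ ((1:ℝ)/(2-α)) := Real.rpow_nonneg (abs_nonneg _) _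
      have hM0 : 0 ≤ min ‖z.2 - w.2‖ (‖z.2 - w.2‖ ^ (2/(2-α)) *
          min (xdOf d hd z) (xdOf d hd w) ^ (-(α/(2-α)))) :=
        le_min (norm_nonneg _) (mul_nonneg (Real.rpow_nonneg (norm_nonneg _) _)
          (Real.rpow_nonneg hmin.le _))
      obtain ⟨h1, h2⟩ := (add_eq_zero_iff_of_nonneg hT0 hM0).mp h
      have ht : z.1 = w.1 := by
        have := (Real.rpow_eq_zero (abs_nonneg _) hβ.ne').mp h1
        have := abs_eq_zero.mp this
        linarith
      have hx : z.2 = w.2 := by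
        by_contra hne
        have hnm : 0 < ‖z.2 - w.2‖ := by
          rw [norm_pos_iff]
          exact sub_ne_zero.mpr hne
        have : 0 < min ‖z.2 - w.2‖ (‖z.2 - w.2‖ ^ (2/(2-α)) *
            min (xdOf d hd z) (xdOf d hd w) ^ (-(α/(2-α)))) :=
          lt_min hnm (mul_pos (Real.rpow_pos_of_pos hnm _) (Real.rpow_pos_of_pos hmin _))
        linarith
      exact Prod.ext ht hx
    · intro h
      subst h
      rw [varrho]
      simp only [sub_self, abs_zero, norm_zero]
      rw [Real.zero_rpow (by positivity : (1:ℝ)/(2-α) ≠ 0),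
        Real.zero_rpow (by positivity : 2/(2-α) ≠ 0), zero_mul, min_self, add_zero]
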